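/- arXiv:2108.13152 — 2 statements merged into one kernel-verified Lean document; each statement's English description precedes it below -/
import Mathlib

section
/- SAut(F₂) admits a nontrivial action on a set of two elements; that is, there exists a nontrivial group homomorphism from SAut(F₂) to the symmetric group on a two-element set (equivalently, SAut(F₂) surjects onto ℤ/2ℤ). -/
open FreeGroup

/-- The exponent sum of the generator `j` in a word of the free group `F_n`. -/
noncomputable def expSum {n : ℕ} (j : Fin n) : FreeGroup (Fin n) →* Multiplicative ℤ :=
  FreeGroup.lift fun k => Multiplicative.ofAdd (if k = j then (1 : ℤ) else 0)

/-- The matrix induced on the abelianization `ℤⁿ` of `F_n` by an automorphism of `F_n`;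
this realizes the canonical map `Aut(F_n) → GL_n(ℤ)`. -/
noncomputable def autMatrix {n : ℕ} (e : MulAut (FreeGroup (Fin n))) :
    Matrix (Fin n) (Fin n) ℤ :=
  fun i j => Multiplicative.toAdd (expSum j (e (FreeGroup.of i)))

/-- Auxiliary homomorphism: `w ↦ ∑ k (exponent sum of a_k in w) * c k`. -/
noncomputable def rowHom {n : ℕ} (c : Fin n → ℤ) : FreeGroup (Fin n) →* Multiplicative ℤ where
  toFun w := Multiplicative.ofAdd (∑ k, Multiplicative.toAdd (expSum k w) * c k)
  map_one' := by simp
  map_mul' := by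
    intro w1 w2
    simp [map_mul, toAdd_mul, add_mul, Finset.sum_add_distrib, ofAdd_add]

lemma expSum_apply_aut {n : ℕ} (e : MulAut (FreeGroup (Fin n))) (j : Fin n)
    (w : FreeGroup (Fin n)) :
    Multiplicative.toAdd (expSum j (e w)) =
      ∑ k, Multiplicative.toAdd (expSum k w) * autMatrix e k j := by
  have h : (expSum j).comp (MulEquiv.toMonoidHom e) = rowHom (fun k => autMatrix e k j) := by
    apply FreeGroup.ext_hom
    intro a
    show expSum j (e (FreeGroup.of a)) =
      Multiplicative.ofAdd
        (∑ k, Multiplicative.toAdd (expSum k (FreeGroup.of a)) * autMatrix e k j)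
    have h1 : ∀ k : Fin n, Multiplicative.toAdd (expSum k (FreeGroup.of a)) * autMatrix e k j
        = if a = k then autMatrix e k j else 0 := by
      intro k
      simp [expSum, ite_mul]
    rw [Finset.sum_congr rfl (fun k _ => h1 k), Finset.sum_ite_eq]
    simp [autMatrix]
  have := DFunLike.congr_fun h w
  simpa [rowHom, mul_comm] using congrArg Multiplicative.toAdd this

lemma autMatrix_mul {n : ℕ} (e1 e2 : MulAut (FreeGroup (Fin n))) :
    autMatrix (e1 * e2) = autMatrix e2 * autMatrix e1 := by
  ext i j
  show Multiplicative.toAdd (expSum j (e1 (e2 (FreeGroup.of i)))) = _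
  rw [expSum_apply_aut e1 j (e2 (FreeGroup.of i))]
  simp [Matrix.mul_apply, autMatrix]

lemma autMatrix_one {n : ℕ} : autMatrix (1 : MulAut (FreeGroup (Fin n))) = 1 := by
  ext i j
  simp [autMatrix, expSum, Matrix.one_apply, eq_comm]

/-- `SAut(F_n)`: the subgroup of `Aut(F_n)` of automorphisms whose induced matrix on the
abelianization `ℤⁿ` has determinant `1`, i.e. the kernel of `det ∘ φ`. -/
noncomputable def SAut (n : ℕ) : Subgroup (MulAut (FreeGroup (Fin n))) where
  carrier := {e | (autMatrix e).det = 1}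
  one_mem' := by simp [Set.mem_setOf_eq, autMatrix_one]
  mul_mem' := by
    intro a b ha hb
    simp only [Set.mem_setOf_eq] at *
    rw [autMatrix_mul, Matrix.det_mul, ha, hb, mul_one]
  inv_mem' := by
    intro a ha
    simp only [Set.mem_setOf_eq] at *
    have h : autMatrix (a * a⁻¹) = autMatrix a⁻¹ * autMatrix a := autMatrix_mul a a⁻¹
    rw [mul_inv_cancel, autMatrix_one] at h
    have := congrArg Matrix.det h
    rw [Matrix.det_one, Matrix.det_mul, ha, mul_one] at this
    exact this.symm

/-- Build an automorphism of `F_n` from its values on the generators together with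
the values of the inverse automorphism on the generators. -/
noncomputable def mkAut {n : ℕ} (f g : Fin n → FreeGroup (Fin n))
    (h1 : ∀ k, FreeGroup.lift g (f k) = FreeGroup.of k)
    (h2 : ∀ k, FreeGroup.lift f (g k) = FreeGroup.of k) :
    MulAut (FreeGroup (Fin n)) :=
  MonoidHom.toMulEquiv (FreeGroup.lift f) (FreeGroup.lift g)
    (FreeGroup.ext_hom _ _ (by simp [h1]))
    (FreeGroup.ext_hom _ _ (by simp [h2]))

lemma mkAut_apply {n : ℕ} (f g : Fin n → FreeGroup (Fin n)) (h1 h2) (w : FreeGroup (Fin n)) :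
    mkAut f g h1 h2 w = FreeGroup.lift f w := rfl

/-- The right transvection `ρ_ij : a_i ↦ a_i a_j`, fixing all other generators
(junk value `1` if `i = j`). -/
noncomputable def rho {n : ℕ} (i j : Fin n) : MulAut (FreeGroup (Fin n)) :=
  if h : i = j then 1 else
    mkAut (fun k => if k = i then .of i * .of j else .of k)
          (fun k => if k = i then .of i * (.of j)⁻¹ else .of k)
      (by
        intro k
        have hji : ¬ (j = i) := fun hji => h hji.symm
        by_cases hk : k = i
        · subst hk; simp [hji]
        · simp [hk])
      (by
        intro k
        have hji : ¬ (j = i) := fun hji => h hji.symm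
        by_cases hk : k = i
        · subst hk; simp [hji]
        · simp [hk])

/-- The left transvection `λ_ij : a_i ↦ a_j a_i`, fixing all other generators
(junk value `1` if `i = j`). -/
noncomputable def lam {n : ℕ} (i j : Fin n) : MulAut (FreeGroup (Fin n)) :=
  if h : i = j then 1 else
    mkAut (fun k => if k = i then .of j * .of i else .of k)
          (fun k => if k = i then (FreeGroup.of j)⁻¹ * .of i else .of k)
      (by
        intro k
        have hji : ¬ (j = i) := fun hji => h hji.symm
        by_cases hk : k = i
        · subst hk; simp [hji]
        · simp [hk])
      (by
        intro k
        have hji : ¬ (j = i) := fun hji => h hji.symm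
        by_cases hk : k = i
        · subst hk; simp [hji]
        · simp [hk])

/-- The involution `ε_i : a_i ↦ a_i⁻¹`, fixing all other generators. -/
noncomputable def eps {n : ℕ} (i : Fin n) : MulAut (FreeGroup (Fin n)) :=
  mkAut (fun k => if k = i then (FreeGroup.of i)⁻¹ else .of k)
        (fun k => if k = i then (FreeGroup.of i)⁻¹ else .of k)
    (by intro k; by_cases hk : k = i <;> simp [hk])
    (by intro k; by_cases hk : k = i <;> simp [hk])

/-- The automorphism `σ_τ` of `F_n` permuting the generators according to `τ`. -/
noncomputable def sigmaPerm {n : ℕ} (τ : Equiv.Perm (Fin n)) : MulAut (FreeGroup (Fin n)) :=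
  FreeGroup.freeGroupCongr τ

/-- The transposition `σ_ij` swapping the generators `a_i` and `a_j`. -/
noncomputable def sigmaSwap {n : ℕ} (i j : Fin n) : MulAut (FreeGroup (Fin n)) :=
  sigmaPerm (Equiv.swap i j)

/-- The transposition `σ_{i(n+1)}` from the standard copy of `S_{n+1}` in `Aut(F_n)`:
`a_i ↦ a_i⁻¹` and `a_k ↦ a_k a_i⁻¹` for `k ≠ i`. -/
noncomputable def sigmaLast {n : ℕ} (i : Fin n) : MulAut (FreeGroup (Fin n)) :=
  mkAut (fun k => if k = i then (FreeGroup.of i)⁻¹ else .of k * (.of i)⁻¹)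
        (fun k => if k = i then (FreeGroup.of i)⁻¹ else .of k * (.of i)⁻¹)
    (by intro k; by_cases hk : k = i <;> simp [hk])
    (by intro k; by_cases hk : k = i <;> simp [hk])

lemma autMatrix_rho {n : ℕ} (i j : Fin n) (hij : i ≠ j) :
    autMatrix (rho i j) = Matrix.transvection i j 1 := by
  ext a b
  rw [rho, dif_neg hij]
  by_cases ha : a = i
  · subst ha
    simp [mkAut_apply, autMatrix, expSum, Matrix.transvection, Matrix.single,
      Matrix.one_apply, hij, eq_comm]
  · have ha' : ¬ i = a := fun h' => ha h'.symm
    simp [mkAut_apply, autMatrix, expSum, Matrix.transvection, Matrix.single,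
      Matrix.one_apply, ha, ha', eq_comm]

/-- The right transvections lie in `SAut(F_n)`. -/
lemma rho_mem_SAut {n : ℕ} (i j : Fin n) (hij : i ≠ j) : rho i j ∈ SAut n := by
  show (autMatrix (rho i j)).det = 1
  rw [autMatrix_rho i j hij, Matrix.det_transvection_of_ne i j hij 1]

/-- The subgroup `D_n' ≅ (ℤ/2ℤ)^{n-1} ⋊ A_n` of `SAut(F_n)`, generated by the products
`ε_i ε_j` (`i ≠ j`) together with the automorphisms permuting the generators according to
even permutations. -/
noncomputable def Dn' (n : ℕ) : Subgroup (MulAut (FreeGroup (Fin n))) :=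
  Subgroup.closure
    ({e | ∃ i j : Fin n, i ≠ j ∧ e = eps i * eps j} ∪
     {e | ∃ τ : Equiv.Perm (Fin n), Equiv.Perm.sign τ = 1 ∧ e = sigmaPerm τ})

/-- The standard copy of `S_{n+1}` in `Aut(F_n)`, generated by the transpositions `σ_ij`
and the `σ_{i(n+1)}`. -/
noncomputable def Sn1 (n : ℕ) : Subgroup (MulAut (FreeGroup (Fin n))) :=
  Subgroup.closure
    ({e | ∃ i j : Fin n, i ≠ j ∧ e = sigmaSwap i j} ∪
     {e | ∃ i : Fin n, e = sigmaLast i})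

/-- The standard copy of `A_{n+1}` in `SAut(F_n)`: the intersection of the standard copy
of `S_{n+1}` with `SAut(F_n)`. -/
noncomputable def An1 (n : ℕ) : Subgroup (MulAut (FreeGroup (Fin n))) :=
  Sn1 n ⊓ SAut n

/-- The sign homomorphism `GL₂(𝔽₂) ≅ S₃ → ℤ/2 ≅ Perm (Fin 2)`. -/
noncomputable def glSign : (Matrix (Fin 2) (Fin 2) (ZMod 2))ˣ →* Equiv.Perm (Fin 2) where
  toFun M := if M.val = 1 ∨ Matrix.trace M.val = 1 then 1 else Equiv.swap 0 1
  map_one' := by simp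
  map_mul' := by decide

/-- The mod-2 reduction of the transposed abelianization matrix of an automorphism. -/
noncomputable def matMod2 {n : ℕ} (e : MulAut (FreeGroup (Fin n))) :
    Matrix (Fin n) (Fin n) (ZMod 2) :=
  Matrix.transpose ((autMatrix e).map (Int.cast : ℤ → ZMod 2))

lemma matMod2_mul {n : ℕ} (e1 e2 : MulAut (FreeGroup (Fin n))) :
    matMod2 (e1 * e2) = matMod2 e1 * matMod2 e2 := by
  rw [matMod2, autMatrix_mul]
  rw [show ((autMatrix e2 * autMatrix e1).map (Int.cast : ℤ → ZMod 2))
      = (autMatrix e2).map Int.cast * (autMatrix e1).map Int.cast from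
      Matrix.map_mul (f := Int.castRingHom (ZMod 2))]
  rw [Matrix.transpose_mul]; rfl

lemma matMod2_one {n : ℕ} : matMod2 (1 : MulAut (FreeGroup (Fin n))) = 1 := by
  simp [matMod2, autMatrix_one]

/-- The mod-2 abelianization representation `Aut(F_n) → GL_n(𝔽₂)`. -/
noncomputable def toGL {n : ℕ} :
    MulAut (FreeGroup (Fin n)) →* (Matrix (Fin n) (Fin n) (ZMod 2))ˣ where
  toFun e :=
    ⟨matMod2 e, matMod2 e⁻¹,
     by rw [← matMod2_mul, mul_inv_cancel, matMod2_one],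
     by rw [← matMod2_mul, inv_mul_cancel, matMod2_one]⟩
  map_one' := by ext; simp [matMod2_one]
  map_mul' e1 e2 := by ext : 1; exact matMod2_mul e1 e2

lemma matMod2_rho01 : matMod2 (rho (0 : Fin 2) 1) = !![1, 0; 1, 1] := by
  rw [matMod2, autMatrix_rho 0 1 (by decide)]
  ext i j
  fin_cases i <;> fin_cases j <;>
    simp [Matrix.transvection, Matrix.single, Matrix.one_apply]

/-- `SAut(F₂)` admits a nontrivial action on a set of two elements. -/
theorem SAutF2_nontrivial_action_on_two_elements :
    ∃ ψ : ↥(SAut 2) →* Equiv.Perm (Fin 2), ψ ≠ 1 := by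
  refine ⟨glSign.comp (toGL.comp (SAut 2).subtype), fun h => ?_⟩
  have hx : rho (0 : Fin 2) 1 ∈ SAut 2 := rho_mem_SAut 0 1 (by decide)
  have h1 : glSign (toGL (rho (0 : Fin 2) 1)) = 1 := by
    have := DFunLike.congr_fun h (⟨rho 0 1, hx⟩ : ↥(SAut 2))
    simpa using this
  have h2 : glSign (toGL (rho (0 : Fin 2) 1)) = Equiv.swap 0 1 := by
    have hval : (toGL (rho (0 : Fin 2) 1)).val = !![1, 0; 1, 1] := matMod2_rho01
    show (if (toGL (rho (0 : Fin 2) 1)).val = 1 ∨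
        Matrix.trace (toGL (rho (0 : Fin 2) 1)).val = 1 then 1 else Equiv.swap 0 1)
      = Equiv.swap 0 1
    rw [hval]
    rw [if_neg (by decide)]
  rw [h1] at h2
  exact absurd h2.symm (by decide)
end

section
/- Let n ≥ 5 and let S be the subgroup of D_n′ consisting of all elements of D_n′ that fix the generators a₁ and a₂. Then S equals the centralizer of ρ₁₂ in D_n′: an element g ∈ D_n′ commutes with ρ₁₂ if and only if g(a₁) = a₁ and g(a₂) = a₂. -/
open FreeGroup

section Aux

lemma eps_apply {n : ℕ} (i k : Fin n) :
    eps i (FreeGroup.of k) = if k = i then (FreeGroup.of i)⁻¹ else FreeGroup.of k := by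
  rw [eps, mkAut_apply, FreeGroup.lift_apply_of]

lemma rho_apply {n : ℕ} {i j : Fin n} (h : i ≠ j) (k : Fin n) :
    rho i j (FreeGroup.of k) =
      if k = i then FreeGroup.of i * FreeGroup.of j else FreeGroup.of k := by
  rw [rho, dif_neg h, mkAut_apply, FreeGroup.lift_apply_of]

lemma sigmaPerm_apply {n : ℕ} (τ : Equiv.Perm (Fin n)) (k : Fin n) :
    sigmaPerm τ (FreeGroup.of k) = FreeGroup.of (τ k) := by
  simp [sigmaPerm]

lemma toAdd_expSum_of {n : ℕ} (j i : Fin n) :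
    Multiplicative.toAdd (expSum j (FreeGroup.of i)) = if i = j then (1:ℤ) else 0 := by
  simp [expSum]

lemma toAdd_expSum_of_zpow {n : ℕ} (j i : Fin n) (m : ℤ) :
    Multiplicative.toAdd (expSum j (FreeGroup.of i ^ m)) =
      m * (if i = j then (1:ℤ) else 0) := by
  rw [_root_.map_zpow, toAdd_zpow, toAdd_expSum_of]
  split <;> simp

lemma of_zpow_eq {n : ℕ} {i j : Fin n} {s t : ℤˣ}
    (h : FreeGroup.of i ^ (s:ℤ) = FreeGroup.of j ^ (t:ℤ)) : i = j ∧ s = t := by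
  have hi := congrArg (fun w => Multiplicative.toAdd (expSum i w)) h
  simp only [toAdd_expSum_of_zpow, eq_self_iff_true, if_true, mul_one] at hi
  by_cases hji : j = i
  · subst hji
    simp only [eq_self_iff_true, if_true, mul_one] at hi
    exact ⟨rfl, Units.ext hi⟩
  · rw [if_neg hji, mul_zero] at hi
    rcases Int.units_eq_one_or s with hs | hs <;> rw [hs] at hi <;> simp at hi

lemma of_zpow_ne_one {n : ℕ} (i : Fin n) (s : ℤˣ) : FreeGroup.of i ^ (s:ℤ) ≠ 1 := by
  intro h
  have hi := congrArg (fun w => Multiplicative.toAdd (expSum i w)) h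
  simp only [toAdd_expSum_of_zpow, if_pos rfl, mul_one, map_one, toAdd_one] at hi
  rcases Int.units_eq_one_or s with hs | hs <;> rw [hs] at hi <;> simp at hi

/-- The subgroup of "signed permutation" automorphisms: `a_k ↦ a_{τ k}^{± 1}`. -/
noncomputable def signedSubgroup (n : ℕ) : Subgroup (MulAut (FreeGroup (Fin n))) where
  carrier := {g | ∃ (τ : Equiv.Perm (Fin n)) (s : Fin n → ℤˣ),
    ∀ k, g (FreeGroup.of k) = FreeGroup.of (τ k) ^ ((s k : ℤ))}
  one_mem' := ⟨1, fun _ => 1, by simp⟩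
  mul_mem' := by
    rintro a b ⟨τa, sa, ha⟩ ⟨τb, sb, hb⟩
    refine ⟨τa * τb, fun k => sa (τb k) * sb k, fun k => ?_⟩
    have : (a * b) (FreeGroup.of k) = a (b (FreeGroup.of k)) := rfl
    rw [this, hb, map_zpow, ha]
    rw [← zpow_mul]
    push_cast
    rw [mul_comm ((sa (τb k) : ℤ))]
    rfl
  inv_mem' := by
    rintro a ⟨τ, s, ha⟩
    refine ⟨τ⁻¹, fun k => s (τ⁻¹ k), fun k => ?_⟩
    have key : a (FreeGroup.of (τ⁻¹ k) ^ ((s (τ⁻¹ k) : ℤ))) = FreeGroup.of k := by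
      rw [map_zpow, ha, ← zpow_mul]
      have : ((s (τ⁻¹ k) : ℤ)) * ((s (τ⁻¹ k) : ℤ)) = 1 := by
        rcases Int.units_eq_one_or (s (τ⁻¹ k)) with h | h <;> rw [h] <;> norm_num
      rw [this, zpow_one, Equiv.Perm.inv_def, Equiv.apply_symm_apply]
    have : a⁻¹ (FreeGroup.of k) = a.symm (FreeGroup.of k) := rfl
    rw [this, MulEquiv.symm_apply_eq, key]

lemma Dn'_le_signed {n : ℕ} : Dn' n ≤ signedSubgroup n := by
  rw [Dn']
  apply Subgroup.closure_le _ |>.mpr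
  rintro e (⟨i, j, hij, rfl⟩ | ⟨τ, _, rfl⟩)
  · refine ⟨1, fun k => if k = i ∨ k = j then -1 else 1, fun k => ?_⟩
    have hcomp : (eps i * eps j) (FreeGroup.of k) = eps i (eps j (FreeGroup.of k)) := rfl
    by_cases hki : k = i
    · subst hki
      have hkj : ¬ (k = j) := hij
      simp [hcomp, eps_apply, hkj]
    · by_cases hkj : k = j
      · subst hkj
        simp [hcomp, eps_apply, hki]
      · simp [hcomp, eps_apply, hki, hkj]
  · exact ⟨τ, fun _ => 1, fun k => by rw [sigmaPerm_apply]; simp⟩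

lemma centralizer_aux {n : ℕ} (i0 i1 : Fin n) (h01 : i0 ≠ i1)
    (g : MulAut (FreeGroup (Fin n))) (hg : g ∈ Dn' n) :
    Commute g (rho i0 i1) ↔
      (g (FreeGroup.of i0) = FreeGroup.of i0 ∧ g (FreeGroup.of i1) = FreeGroup.of i1) := by
  obtain ⟨τ, s, hτ⟩ := Dn'_le_signed hg
  have h10 : i1 ≠ i0 := fun h => h01 h.symm
  constructor
  · intro hc
    have happ : g (rho i0 i1 (FreeGroup.of i0)) = rho i0 i1 (g (FreeGroup.of i0)) := by
      have := congrArg (fun e : MulAut (FreeGroup (Fin n)) => e (FreeGroup.of i0)) hc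
      exact this
    rw [rho_apply h01, if_pos rfl, _root_.map_mul, hτ, hτ, _root_.map_zpow, rho_apply h01] at happ
    by_cases h0 : τ i0 = i0
    · rw [if_pos h0, h0] at happ
      -- compare exponent sums of `a_{i1}`
      have he := congrArg (fun w => Multiplicative.toAdd (expSum i1 w)) happ
      simp only [_root_.map_mul, toAdd_mul, toAdd_expSum_of_zpow, _root_.map_zpow, toAdd_zpow,
        toAdd_expSum_of, if_neg h01, mul_zero, zero_add, smul_eq_mul, mul_one, add_zero,
        mul_zero, eq_self_iff_true, if_true] at he
      have hτ1 : τ i1 = i1 := by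
        by_contra hne
        rw [if_neg hne, mul_zero] at he
        rcases Int.units_eq_one_or (s i0) with hs | hs <;> rw [hs] at he <;> simp at he
      rw [if_pos hτ1, mul_one] at he
      have hs1 : s i1 = s i0 := Units.ext he
      rcases Int.units_eq_one_or (s i0) with hs | hs
      · constructor
        · rw [hτ, h0, hs]; simp
        · rw [hτ, hτ1, hs1, hs]; simp
      · -- impossible: apply a homomorphism to a nonabelian group
        exfalso
        rw [hτ1, hs1, hs] at happ
        have hφ := congrArg (FreeGroup.lift (fun k : Fin n =>
          if k = i0 then Equiv.swap (0 : Fin 3) 1 else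
            if k = i1 then Equiv.swap 1 2 else 1)) happ
        simp only [_root_.map_mul, _root_.map_zpow, _root_.map_inv, FreeGroup.lift_apply_of, if_neg h10,
          if_neg h01, eq_self_iff_true, if_true, Units.val_neg, Units.val_one, zpow_neg,
          zpow_one, mul_inv_rev] at hφ
        revert hφ
        decide
    · rw [if_neg h0] at happ
      exact absurd (mul_eq_left.mp happ) (of_zpow_ne_one _ _)
  · rintro ⟨hg0, hg1⟩
    have e0 : FreeGroup.of (τ i0) ^ ((s i0 : ℤ)) = FreeGroup.of i0 ^ (((1 : ℤˣ)) : ℤ) := by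
      rw [← hτ, hg0]; simp
    obtain ⟨hτ0, -⟩ := of_zpow_eq e0
    have key : ∀ k, g (rho i0 i1 (FreeGroup.of k)) = rho i0 i1 (g (FreeGroup.of k)) := by
      intro k
      by_cases hk0 : k = i0
      · subst hk0
        rw [rho_apply h01, if_pos rfl, _root_.map_mul, hg0, hg1, rho_apply h01, if_pos rfl]
      · by_cases hk1 : k = i1
        · subst hk1
          rw [rho_apply h01, if_neg h10, hg1, rho_apply h01, if_neg h10]
        · have hτk : τ k ≠ i0 := by
            intro h
            exact hk0 (τ.injective (by rw [h, hτ0]))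
          rw [rho_apply h01, if_neg hk0, hτ, _root_.map_zpow, rho_apply h01, if_neg hτk]
    show g * rho i0 i1 = rho i0 i1 * g
    have hhom : MulEquiv.toMonoidHom (g * rho i0 i1) = MulEquiv.toMonoidHom (rho i0 i1 * g) :=
      FreeGroup.ext_hom _ _ (fun k => key k)
    exact MulEquiv.ext fun x => DFunLike.congr_fun hhom x

end Aux

/-- for `n ≥ 5`, an element `g` of `D_n'` commutes with `ρ₁₂` if and only
if `g` fixes the generators `a₁` and `a₂`; i.e. the subgroup `S` of `D_n'` of elements
fixing `a₁, a₂` equals the centralizer of `ρ₁₂` in `D_n'`. -/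
theorem fixing_subgroup_eq_centralizer {n : ℕ} (hn : 5 ≤ n)
    (g : MulAut (FreeGroup (Fin n))) (hg : g ∈ Dn' n) :
    Commute g (rho ⟨0, by omega⟩ ⟨1, by omega⟩) ↔
      (g (FreeGroup.of ⟨0, by omega⟩) = FreeGroup.of ⟨0, by omega⟩ ∧
       g (FreeGroup.of ⟨1, by omega⟩) = FreeGroup.of ⟨1, by omega⟩) := by
  exact centralizer_aux _ _ (by simp [Fin.ext_iff]) g hg
end
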